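/- Let μ be a Borel probability measure on ℝ with m_8(μ) < ∞, m_1(μ) = 0 and m_2(μ) = 1, and let h = c₂(μ) n^{−3/2} and Î_n = {x ∈ ℝ : |x − a_n| ≤ 2/e_n − h}. Then there exist c(μ) > 0 and n₁ = n₁(μ) ∈ ℕ such that for all n ≥ n₁ and all x ∈ Î_n: T_n(x) = a_n + ½( (1+b_n)(x−a_n) + (1−b_n) √((x−a_n)² − 4/e_n²) ) + r_{n5}(x) / √((e_n(x−a_n))² − 4), where |r_{n5}(x)| ≤ c(μ) n^{−3/2} (the square roots being the boundary values of the branch with Im z > 0 ⟹ Im M_n(z) ≥ 0). -/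

import Mathlib

open MeasureTheory Complex Filter Set
open scoped Topology

noncomputable section

namespace FreeCLT

def mom (μ : Measure ℝ) (k : ℕ) : ℝ := ∫ u, u ^ k ∂μ

def cauchy (μ : Measure ℝ) (z : ℂ) : ℂ := ∫ u, (z - (u : ℂ))⁻¹ ∂μ

def recip (μ : Measure ℝ) (z : ℂ) : ℂ := (cauchy μ z)⁻¹

def MemF (F : ℂ → ℂ) : Prop :=
  ∃ ν : Measure ℝ, IsProbabilityMeasure ν ∧ ∀ z : ℂ, 0 < z.im → F z = recip ν z

def Subord (μ : Measure ℝ) (n : ℕ) (Z : ℂ → ℂ) : Prop :=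
  MemF Z ∧ ∀ z : ℂ, 0 < z.im →
    z = (n : ℂ) * Z z - ((n : ℂ) - 1) * recip μ (Z z)

def IsBoxPow (μ : Measure ℝ) (n : ℕ) (Z : ℂ → ℂ) (ν : Measure ℝ) : Prop :=
  Subord μ n Z ∧ IsProbabilityMeasure ν ∧
    ∀ z : ℂ, 0 < z.im → recip ν z = recip μ (Z z)

def rescale (n : ℕ) (ν : Measure ℝ) : Measure ℝ :=
  ν.map (fun x => x / Real.sqrt n)

def HasDensity (ν : Measure ℝ) (p : ℝ → ℝ) : Prop :=
  Continuous p ∧ (∀ x, 0 ≤ p x) ∧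
    ν = MeasureTheory.volume.withDensity (fun x => ENNReal.ofReal (p x))

def aQ (μ : Measure ℝ) (n : ℕ) : ℝ := mom μ 3 / Real.sqrt n
def bQ (μ : Measure ℝ) (n : ℕ) : ℝ := (mom μ 4 - (mom μ 3) ^ 2 - 1) / n
def dQ (μ : Measure ℝ) (n : ℕ) : ℝ := (mom μ 4 - (mom μ 3) ^ 2) / n
def eQ (μ : Measure ℝ) (n : ℕ) : ℝ := (1 - bQ μ n) / Real.sqrt (1 - dQ μ n)

def pw (x : ℝ) : ℝ := (1 / (2 * Real.pi)) * Real.sqrt (max (4 - x ^ 2) 0)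

def truncSet (n : ℕ) : Set ℝ := {u : ℝ | |u| ≤ Real.sqrt ((n : ℝ) - 1) / Real.pi}

def Tfun (W : ℕ → ℂ → ℂ) (n : ℕ) (z : ℂ) : ℂ :=
  W n ((Real.sqrt (n : ℝ) : ℂ) * z) / (Real.sqrt (n : ℝ) : ℂ)

set_option maxHeartbeats 1000000 in
lemma recip_im_pos (ν : Measure ℝ) [IsProbabilityMeasure ν] {z : ℂ} (hz : 0 < z.im) :
    0 < (recip ν z).im := by
  have hne : ∀ u : ℝ, z - (u : ℂ) ≠ 0 := by
    intro u h
    have h2 : (z - (u : ℂ)).im = 0 := by rw [h]; rfl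
    simp [Complex.sub_im] at h2
    linarith
  have hcont : Continuous fun u : ℝ => (z - (u : ℂ))⁻¹ :=
    (continuous_const.sub Complex.continuous_ofReal).inv₀ hne
  have hbound : ∀ u : ℝ, ‖(z - (u : ℂ))⁻¹‖ ≤ z.im⁻¹ := by
    intro u
    rw [norm_inv]
    apply inv_anti₀ hz
    calc z.im ≤ |(z - (u : ℂ)).im| := by
          rw [Complex.sub_im, Complex.ofReal_im, sub_zero]; exact le_abs_self _
      _ ≤ ‖z - (u : ℂ)‖ := Complex.abs_im_le_norm _
      _ = ‖z - (u : ℂ)‖ := rfl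
  have hint : Integrable (fun u : ℝ => (z - (u : ℂ))⁻¹) ν :=
    (integrable_const (z.im⁻¹)).mono' hcont.aestronglyMeasurable
      (Filter.Eventually.of_forall fun u => hbound u)
  have him : (cauchy ν z).im = ∫ u, ((z - (u : ℂ))⁻¹).im ∂ν := (integral_im hint).symm
  have hval : ∀ u : ℝ, ((z - (u : ℂ))⁻¹).im = -(z.im / Complex.normSq (z - (u : ℂ))) := by
    intro u
    rw [Complex.inv_im, Complex.sub_im, Complex.ofReal_im, sub_zero, neg_div]
  have hintR : Integrable (fun u : ℝ => z.im / Complex.normSq (z - (u : ℂ))) ν := by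
    have hcontR : Continuous fun u : ℝ => z.im / Complex.normSq (z - (u : ℂ)) := by
      apply continuous_const.div
      · exact Complex.continuous_normSq.comp (continuous_const.sub Complex.continuous_ofReal)
      · intro u; exact Complex.normSq_pos.2 (hne u) |>.ne'
    apply (integrable_const (z.im⁻¹)).mono' hcontR.aestronglyMeasurable
    apply Filter.Eventually.of_forall
    intro u
    have hpos : 0 < Complex.normSq (z - (u : ℂ)) := Complex.normSq_pos.2 (hne u)
    have hge : z.im * z.im ≤ Complex.normSq (z - (u : ℂ)) := by
      rw [Complex.normSq_apply, Complex.sub_im, Complex.ofReal_im, sub_zero]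
      nlinarith [sq_nonneg (z - (u : ℂ)).re]
    rw [Real.norm_eq_abs, _root_.abs_of_nonneg (div_nonneg hz.le hpos.le)]
    rw [div_le_iff₀ hpos, inv_mul_eq_div, le_div_iff₀ hz]
    linarith
  have hpos : 0 < ∫ u, z.im / Complex.normSq (z - (u : ℂ)) ∂ν := by
    rw [integral_pos_iff_support_of_nonneg
      (fun u => (div_pos hz (Complex.normSq_pos.2 (hne u))).le) hintR]
    have hsupp : Function.support (fun u : ℝ => z.im / Complex.normSq (z - (u : ℂ)))
        = Set.univ :=
      Set.eq_univ_iff_forall.2 fun u => (div_pos hz (Complex.normSq_pos.2 (hne u))).ne'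
    rw [hsupp]
    simp
  have hcim : (cauchy ν z).im < 0 := by
    rw [him]
    have heq : (fun u : ℝ => ((z - (u : ℂ))⁻¹).im)
        = fun u : ℝ => -(z.im / Complex.normSq (z - (u : ℂ))) := funext hval
    rw [heq, integral_neg]
    linarith
  have hc0 : cauchy ν z ≠ 0 := by
    intro h
    rw [h] at hcim
    simp at hcim
  rw [recip, Complex.inv_im]
  exact div_pos (neg_pos.2 hcim) (Complex.normSq_pos.2 hc0)

set_option maxHeartbeats 2000000 in
theorem stmt_18
    (μ : Measure ℝ) [IsProbabilityMeasure μ]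
    (h8 : Integrable (fun u => u ^ 8) μ)
    (h1 : mom μ 1 = 0) (h2 : mom μ 2 = 1)
    (τ : Measure ℝ) [IsProbabilityMeasure τ]
    (hτ : ∀ z : ℂ, 0 < z.im → recip μ z = z + ∫ u, ((u : ℂ) - z)⁻¹ ∂τ)
    (μs : ℕ → Measure ℝ) (hμsP : ∀ n : ℕ, IsProbabilityMeasure (μs n))
    (hμs : ∀ n : ℕ, ∀ z : ℂ, 0 < z.im →
      recip (μs n) z = z + ∫ u in truncSet n, ((u : ℂ) - z)⁻¹ ∂τ)
    (W : ℕ → ℂ → ℂ) (νs : ℕ → Measure ℝ)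
    (hboxW : ∀ n : ℕ, 1 ≤ n → IsBoxPow (μs n) n (W n) (νs n))
    (M : ℕ → ℂ → ℂ)
    (hMF : ∀ᶠ n in atTop, MemF (M n))
    (hMeq : ∀ᶠ n in atTop, ∀ z : ℂ, 0 < z.im →
      (2 * (M n z - (aQ μ n : ℂ)) - (1 + (bQ μ n : ℂ)) * (z - (aQ μ n : ℂ))) ^ 2
        = (1 - (bQ μ n : ℂ)) ^ 2 * (z - (aQ μ n : ℂ)) ^ 2 - 4 * (1 - (dQ μ n : ℂ)))
    (c₂ : ℝ) (hc₂ : 0 < c₂)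
    (hexp : ∃ c' : ℝ, 0 < c' ∧ ∀ᶠ n in atTop, ∀ z : ℂ,
      0 < z.im → z.im ≤ 3 → |z.re - aQ μ n| ≤ 2 / eQ μ n - c₂ * (n : ℝ) ^ (-(3 / 2) : ℝ) →
      ‖Tfun W n z - M n z‖
        ≤ c' / ((n : ℝ) ^ ((3 : ℝ) / 2) *
            Real.sqrt ‖((eQ μ n : ℂ) * (z - (aQ μ n : ℂ))) ^ 2 - 4‖))
    (Tb : ℕ → ℂ → ℂ)
    (hTb : ∀ᶠ n in atTop, ContinuousOn (Tb n) {z : ℂ | 0 ≤ z.im} ∧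
      ∀ z : ℂ, 0 < z.im → Tb n z = Tfun W n z) :
    ∃ c : ℝ, 0 < c ∧ ∃ n₁ : ℕ, ∀ n : ℕ, n₁ ≤ n → ∀ x : ℝ,
      |x - aQ μ n| ≤ 2 / eQ μ n - c₂ * (n : ℝ) ^ (-(3 / 2) : ℝ) →
      ‖Tb n (x : ℂ)
          - ((aQ μ n : ℂ) + (1 / 2) *
              ((1 + (bQ μ n : ℂ)) * ((x : ℂ) - (aQ μ n : ℂ))
                + (1 - (bQ μ n : ℂ)) * Complex.I *
                  ((Real.sqrt (4 / eQ μ n ^ 2 - (x - aQ μ n) ^ 2) : ℝ) : ℂ)))‖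
        ≤ c * (n : ℝ) ^ (-(3 / 2) : ℝ) /
            Real.sqrt (4 - (eQ μ n * (x - aQ μ n)) ^ 2) := by
  obtain ⟨c', hc', hexp'⟩ := hexp
  have hbt : ∀ᶠ n : ℕ in atTop, |bQ μ n| < 1 / 2 := by
    have h := tendsto_const_div_atTop_nhds_zero_nat (mom μ 4 - (mom μ 3) ^ 2 - 1)
    have h2 := h.eventually (eventually_abs_sub_lt 0 (by norm_num : (0:ℝ) < 1/2))
    simpa [bQ] using h2
  have hdt : ∀ᶠ n : ℕ in atTop, |dQ μ n| < 1 / 2 := by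
    have h := tendsto_const_div_atTop_nhds_zero_nat (mom μ 4 - (mom μ 3) ^ 2)
    have h2 := h.eventually (eventually_abs_sub_lt 0 (by norm_num : (0:ℝ) < 1/2))
    simpa [dQ] using h2
  have hall := (hMF.and (hMeq.and (hexp'.and (hTb.and (hbt.and hdt))))).and
    (eventually_ge_atTop 1)
  obtain ⟨n₁, hn₁⟩ := eventually_atTop.1 hall
  refine ⟨c', hc', n₁, ?_⟩
  intro n hn x hx
  obtain ⟨⟨hMFn, hMeqn, hexpn, hTbn, hbn, hdn⟩, hn1⟩ := hn₁ n hn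
  set a := aQ μ n with hadef
  set b := bQ μ n with hbdef
  set d := dQ μ n with hddef
  set e := eQ μ n with hedef
  have hb1 : (0:ℝ) < 1 - b := by have := abs_lt.1 hbn; linarith [this.2]
  have hb2 : (0:ℝ) < 1 + b := by have := abs_lt.1 hbn; linarith [this.1]
  have hd1 : (0:ℝ) < 1 - d := by have := abs_lt.1 hdn; linarith [this.2]
  have heeq : e = (1 - b) / Real.sqrt (1 - d) := rfl
  have he : 0 < e := heeq ▸ div_pos hb1 (Real.sqrt_pos.2 hd1)
  have hnpos : (0:ℝ) < n := by exact_mod_cast hn1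
  have hrp : (0:ℝ) < (n:ℝ) ^ (-(3/2) : ℝ) := Real.rpow_pos_of_pos hnpos _
  have hxlt : |x - a| < 2 / e := lt_of_le_of_lt hx (by nlinarith [mul_pos hc₂ hrp])
  have hsq : (x - a) ^ 2 < 4 / e ^ 2 := by
    have h1 : |x - a| ^ 2 < (2 / e) ^ 2 := by
      have h0 := abs_nonneg (x - a)
      have h2 : (0:ℝ) < 2 / e := by positivity
      nlinarith
    rw [← _root_.sq_abs]
    calc |x - a| ^ 2 < (2 / e) ^ 2 := h1
      _ = 4 / e ^ 2 := by rw [div_pow]; norm_num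
  have h4 : (e * (x - a)) ^ 2 < 4 := by
    have he2 : (0:ℝ) < e ^ 2 := by positivity
    have h5 : e ^ 2 * (x - a) ^ 2 < e ^ 2 * (4 / e ^ 2) := mul_lt_mul_of_pos_left hsq he2
    have h6 : e ^ 2 * (4 / e ^ 2) = 4 := by field_simp
    rw [mul_pow]; linarith
  set s := Real.sqrt (4 / e ^ 2 - (x - a) ^ 2) with hsdef
  have hspos : 0 < s := Real.sqrt_pos.2 (by linarith)
  have hssq : s ^ 2 = 4 / e ^ 2 - (x - a) ^ 2 := Real.sq_sqrt (by linarith)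
  set R := (1 - b) * s with hRdef
  have hRpos : 0 < R := mul_pos hb1 hspos
  have hesq : (1 - b) ^ 2 = e ^ 2 * (1 - d) := by
    rw [heeq, div_pow, Real.sq_sqrt hd1.le]
    field_simp
  have hRsq : R ^ 2 = 4 * (1 - d) - (1 - b) ^ 2 * (x - a) ^ 2 := by
    have h7 : R ^ 2 = (1 - b) ^ 2 * (4 / e ^ 2) - (1 - b) ^ 2 * (x - a) ^ 2 := by
      rw [hRdef, mul_pow, hssq]; ring
    have h8 : (1 - b) ^ 2 * (4 / e ^ 2) = 4 * (1 - d) := by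
      rw [hesq]; field_simp
    rw [h7, h8]
  obtain ⟨ν, hνP, hνeq⟩ := hMFn
  haveI := hνP
  set p : ℝ → ℂ := fun ε => (x : ℂ) + (ε : ℂ) * Complex.I with hpdef
  have hpim : ∀ ε : ℝ, (p ε).im = ε := by intro ε; simp [hpdef]
  have hpre : ∀ ε : ℝ, (p ε).re = x := by intro ε; simp [hpdef]
  set Mhat : ℂ := (a : ℂ) + (1 / 2) *
      ((1 + (b : ℂ)) * ((x : ℂ) - (a : ℂ))
        + (1 - (b : ℂ)) * Complex.I * ((s : ℝ) : ℂ)) with hMh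
  set K : ℝ := (1 - b) ^ 2 * (2 * |x - a| + 1) / R + (1 + b) / 2 with hKdef
  have hKbound : ∀ ε : ℝ, 0 < ε → ε ≤ 1 → ε ≤ R / (2 * (1 + b)) →
      ‖M n (p ε) - Mhat‖ ≤ K * ε := by
    intro ε hε hε1 hε2
    have hz : 0 < (p ε).im := by rw [hpim]; exact hε
    have heq := hMeqn (p ε) hz
    set g := M n (p ε) with hgdef
    have hgim : 0 < g.im := by rw [hgdef, hνeq _ hz]; exact recip_im_pos ν hz
    set w : ℂ := 2 * g - (2 * (a : ℂ) + (1 + (b : ℂ)) * (p ε - (a : ℂ))) with hwdef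
    have hw2 : w ^ 2 = (1 - (b : ℂ)) ^ 2 * (p ε - (a : ℂ)) ^ 2 - 4 * (1 - (d : ℂ)) := by
      rw [hwdef, ← heq]; ring
    have hRc := congrArg (fun t : ℝ => (t : ℂ)) hRsq
    push_cast at hRc
    have hsum : w ^ 2 + ((R : ℝ) : ℂ) ^ 2
        = (1 - (b : ℂ)) ^ 2 * ((p ε - (a : ℂ)) ^ 2 - ((x : ℂ) - (a : ℂ)) ^ 2) := by
      rw [hw2]; linear_combination hRc
    have hfact2 : (p ε - (a : ℂ)) ^ 2 - ((x : ℂ) - (a : ℂ)) ^ 2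
        = (ε : ℂ) * (2 * ((x : ℂ) - (a : ℂ)) * Complex.I - (ε : ℂ)) := by
      simp only [hpdef]
      linear_combination ((ε : ℂ) ^ 2) * Complex.I_sq
    have hxa : (x : ℂ) - (a : ℂ) = ((x - a : ℝ) : ℂ) := by push_cast; ring
    have habsf : ‖(p ε - (a : ℂ)) ^ 2 - ((x : ℂ) - (a : ℂ)) ^ 2‖
        ≤ ε * (2 * |x - a| + 1) := by
      rw [hfact2, norm_mul]
      have h1 : ‖(ε : ℂ)‖ = ε := by rw [Complex.norm_real, Real.norm_eq_abs, abs_of_pos hε]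
      have h2 : ‖2 * ((x : ℂ) - (a : ℂ)) * Complex.I - (ε : ℂ)‖
          ≤ 2 * |x - a| + 1 := by
        calc ‖2 * ((x : ℂ) - (a : ℂ)) * Complex.I - (ε : ℂ)‖
            ≤ ‖2 * ((x : ℂ) - (a : ℂ)) * Complex.I‖
              + ‖(ε : ℂ)‖ := by
              rw [sub_eq_add_neg]
              refine (norm_add_le _ _).trans ?_
              rw [norm_neg]
          _ = 2 * |x - a| + ε := by
              rw [norm_mul, norm_mul, Complex.norm_I, hxa, h1, Complex.norm_real, Real.norm_eq_abs]
              simp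
          _ ≤ 2 * |x - a| + 1 := by linarith
      rw [h1]
      exact mul_le_mul_of_nonneg_left h2 hε.le
    have habs1 : ‖w ^ 2 + ((R : ℝ) : ℂ) ^ 2‖
        ≤ (1 - b) ^ 2 * (ε * (2 * |x - a| + 1)) := by
      rw [hsum, norm_mul]
      have h3 : ‖(1 - (b : ℂ)) ^ 2‖ = (1 - b) ^ 2 := by
        rw [norm_pow]
        have hb' : (1 - (b : ℂ)) = ((1 - b : ℝ) : ℂ) := by push_cast; ring
        rw [hb', Complex.norm_real, Real.norm_eq_abs, abs_of_pos hb1]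
      rw [h3]
      exact mul_le_mul_of_nonneg_left habsf (by positivity)
    have hprod : (w - Complex.I * ((R : ℝ) : ℂ)) * (w + Complex.I * ((R : ℝ) : ℂ))
        = w ^ 2 + ((R : ℝ) : ℂ) ^ 2 := by
      linear_combination (-(((R : ℝ) : ℂ) ^ 2)) * Complex.I_sq
    have himw : R / 2 ≤ (w + Complex.I * ((R : ℝ) : ℂ)).im := by
      have h4' : (w + Complex.I * ((R : ℝ) : ℂ)).im = 2 * g.im - (1 + b) * ε + R := by
        rw [hwdef]
        simp [hpdef, Complex.add_im, Complex.sub_im, Complex.mul_im, Complex.mul_re,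
          Complex.add_re, Complex.sub_re, Complex.I_im, Complex.I_re,
          Complex.ofReal_im, Complex.ofReal_re]
        try ring
      rw [h4']
      have hε2' : ε * (2 * (1 + b)) ≤ R := (le_div_iff₀ (by positivity)).1 hε2
      nlinarith [hgim]
    have habsw : R / 2 ≤ ‖w + Complex.I * ((R : ℝ) : ℂ)‖ := by
      calc R / 2 ≤ (w + Complex.I * ((R : ℝ) : ℂ)).im := himw
        _ ≤ |(w + Complex.I * ((R : ℝ) : ℂ)).im| := le_abs_self _
        _ ≤ ‖w + Complex.I * ((R : ℝ) : ℂ)‖ := Complex.abs_im_le_norm _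
    have habs2 : ‖w - Complex.I * ((R : ℝ) : ℂ)‖
        ≤ 2 * (1 - b) ^ 2 * (2 * |x - a| + 1) * ε / R := by
      have h6 : ‖w - Complex.I * ((R : ℝ) : ℂ)‖ * (R / 2)
          ≤ (1 - b) ^ 2 * (ε * (2 * |x - a| + 1)) := by
        calc ‖w - Complex.I * ((R : ℝ) : ℂ)‖ * (R / 2)
            ≤ ‖w - Complex.I * ((R : ℝ) : ℂ)‖
              * ‖w + Complex.I * ((R : ℝ) : ℂ)‖ :=
              mul_le_mul_of_nonneg_left habsw (norm_nonneg _)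
          _ = ‖w ^ 2 + ((R : ℝ) : ℂ) ^ 2‖ := by rw [← norm_mul, hprod]
          _ ≤ _ := habs1
      rw [le_div_iff₀ hRpos]
      nlinarith [norm_nonneg (w - Complex.I * ((R : ℝ) : ℂ))]
    have hcast : ((R : ℝ) : ℂ) = (1 - (b : ℂ)) * ((s : ℝ) : ℂ) := by
      rw [hRdef]; push_cast; ring
    have hdecomp : g - Mhat = (w - Complex.I * ((R : ℝ) : ℂ)) / 2
        + (1 + (b : ℂ)) * (ε : ℂ) * Complex.I / 2 := by
      rw [hwdef, hMh]
      simp only [hpdef]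
      linear_combination (Complex.I / 2) * hcast
    calc ‖g - Mhat‖
        ≤ ‖(w - Complex.I * ((R : ℝ) : ℂ)) / 2‖
          + ‖(1 + (b : ℂ)) * (ε : ℂ) * Complex.I / 2‖ := by
          rw [hdecomp]; exact norm_add_le _ _
      _ ≤ (1 - b) ^ 2 * (2 * |x - a| + 1) * ε / R + (1 + b) * ε / 2 := by
          have e1 : ‖(w - Complex.I * ((R : ℝ) : ℂ)) / 2‖
              = ‖w - Complex.I * ((R : ℝ) : ℂ)‖ / 2 := by
            rw [norm_div]; simp
          have e2 : ‖(1 + (b : ℂ)) * (ε : ℂ) * Complex.I / 2‖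
              = (1 + b) * ε / 2 := by
            rw [norm_div, norm_mul, norm_mul, Complex.norm_I]
            have hb' : (1 + (b : ℂ)) = ((1 + b : ℝ) : ℂ) := by push_cast; ring
            rw [hb', Complex.norm_real, Real.norm_eq_abs, Complex.norm_real, Real.norm_eq_abs,
              abs_of_pos hb2, abs_of_pos hε]
            simp
          rw [e1, e2]
          have h7 : ‖w - Complex.I * ((R : ℝ) : ℂ)‖ / 2
              ≤ (1 - b) ^ 2 * (2 * |x - a| + 1) * ε / R := by
            have h8 : 2 * (1 - b) ^ 2 * (2 * |x - a| + 1) * ε / R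
                = 2 * ((1 - b) ^ 2 * (2 * |x - a| + 1) * ε / R) := by ring
            rw [h8] at habs2
            linarith
          linarith
      _ = K * ε := by rw [hKdef]; field_simp
  have hMlim : Tendsto (fun ε : ℝ => M n (p ε)) (𝓝[>] (0:ℝ)) (𝓝 Mhat) := by
    rw [tendsto_iff_norm_sub_tendsto_zero]
    have hK0 : Tendsto (fun ε : ℝ => K * ε) (𝓝[>] (0:ℝ)) (𝓝 0) := by
      have hc : Continuous fun ε : ℝ => K * ε := continuous_const.mul continuous_id
      have h := hc.tendsto (0:ℝ)
      simpa using h.mono_left nhdsWithin_le_nhds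
    apply squeeze_zero'
    · exact Filter.Eventually.of_forall fun ε => norm_nonneg _
    · have hmin : (0:ℝ) < min 1 (R / (2 * (1 + b))) := lt_min one_pos (by positivity)
      filter_upwards [Ioo_mem_nhdsGT_of_mem
        (show (0:ℝ) ∈ Ico (0:ℝ) (min 1 (R / (2 * (1 + b)))) from ⟨le_refl _, hmin⟩)]
        with ε hε
      have := hKbound ε hε.1 (le_of_lt (lt_of_lt_of_le hε.2 (min_le_left _ _)))
        (le_of_lt (lt_of_lt_of_le hε.2 (min_le_right _ _)))
      simpa using this
    · exact hK0
  have hpc : Tendsto p (𝓝[>] (0:ℝ)) (𝓝 ((x : ℂ))) := by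
    have hc : Continuous p := by
      rw [hpdef]
      exact continuous_const.add (Complex.continuous_ofReal.mul continuous_const)
    have h := (hc.tendsto 0).mono_left (nhdsWithin_le_nhds (s := Set.Ioi (0:ℝ)))
    simpa [hpdef] using h
  have hTbc : Tendsto (fun ε : ℝ => Tb n (p ε)) (𝓝[>] (0:ℝ)) (𝓝 (Tb n ((x : ℂ)))) := by
    have hmem : ((x : ℂ)) ∈ {z : ℂ | 0 ≤ z.im} := by simp
    have hps : Tendsto p (𝓝[>] (0:ℝ)) (𝓝[{z : ℂ | 0 ≤ z.im}] ((x : ℂ))) := by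
      rw [tendsto_nhdsWithin_iff]
      refine ⟨hpc, ?_⟩
      filter_upwards [self_mem_nhdsWithin] with ε hε
      simp only [Set.mem_setOf_eq, hpim]
      exact le_of_lt hε
    exact (hTbn.1 _ hmem).tendsto.comp hps
  have hφ : Tendsto (fun ε : ℝ => ‖Tb n (p ε) - M n (p ε)‖) (𝓝[>] (0:ℝ))
      (𝓝 (‖Tb n ((x : ℂ)) - Mhat‖)) := by
    have h := (hTbc.sub hMlim).norm
    simpa using h
  have hcont2 : Continuous fun ε : ℝ =>
      ‖((e : ℂ) * (p ε - (a : ℂ))) ^ 2 - 4‖ := by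
    apply continuous_norm.comp
    apply Continuous.sub _ continuous_const
    apply Continuous.pow
    apply continuous_const.mul
    rw [hpdef]
    exact (continuous_const.add (Complex.continuous_ofReal.mul continuous_const)).sub
      continuous_const
  have hval0 : ‖((e : ℂ) * (p 0 - (a : ℂ))) ^ 2 - 4‖
      = 4 - (e * (x - a)) ^ 2 := by
    have h9 : ((e : ℂ) * (p 0 - (a : ℂ))) ^ 2 - 4 = (((e * (x - a)) ^ 2 - 4 : ℝ) : ℂ) := by
      simp only [hpdef]
      push_cast
      ring
    rw [h9, Complex.norm_real, Real.norm_eq_abs, abs_of_nonpos (by linarith), neg_sub]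
  have hψ : Tendsto (fun ε : ℝ => c' / ((n : ℝ) ^ ((3:ℝ)/2) *
        Real.sqrt (‖((e : ℂ) * (p ε - (a : ℂ))) ^ 2 - 4‖)))
      (𝓝[>] (0:ℝ))
      (𝓝 (c' / ((n : ℝ) ^ ((3:ℝ)/2) * Real.sqrt (4 - (e * (x - a)) ^ 2)))) := by
    apply Filter.Tendsto.div tendsto_const_nhds
    · apply Filter.Tendsto.mul tendsto_const_nhds
      have hin : Tendsto (fun ε : ℝ => ‖((e : ℂ) * (p ε - (a : ℂ))) ^ 2 - 4‖)
          (𝓝[>] (0:ℝ)) (𝓝 (4 - (e * (x - a)) ^ 2)) := by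
        have h := (hcont2.tendsto 0).mono_left (nhdsWithin_le_nhds (s := Set.Ioi (0:ℝ)))
        rwa [hval0] at h
      have h := (Real.continuous_sqrt.tendsto _).comp hin
      exact h
    · have hden : (0:ℝ) < (n : ℝ) ^ ((3:ℝ)/2) * Real.sqrt (4 - (e * (x - a)) ^ 2) :=
        mul_pos (Real.rpow_pos_of_pos hnpos _) (Real.sqrt_pos.2 (by linarith))
      exact hden.ne'
  have hle : (fun ε : ℝ => ‖Tb n (p ε) - M n (p ε)‖) ≤ᶠ[𝓝[>] (0:ℝ)]
      fun ε : ℝ => c' / ((n : ℝ) ^ ((3:ℝ)/2) *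
        Real.sqrt (‖((e : ℂ) * (p ε - (a : ℂ))) ^ 2 - 4‖)) := by
    filter_upwards [Ioo_mem_nhdsGT_of_mem
      (show (0:ℝ) ∈ Ico (0:ℝ) 3 from ⟨le_refl _, by norm_num⟩)] with ε hε
    have hz : 0 < (p ε).im := by rw [hpim]; exact hε.1
    rw [hTbn.2 _ hz]
    apply hexpn _ hz
    · rw [hpim]; exact hε.2.le
    · rw [hpre]; exact hx
  have hfin := le_of_tendsto_of_tendsto hφ hψ hle
  have hgoal : c' * (n : ℝ) ^ (-(3/2) : ℝ) / Real.sqrt (4 - (e * (x - a)) ^ 2)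
      = c' / ((n : ℝ) ^ ((3:ℝ)/2) * Real.sqrt (4 - (e * (x - a)) ^ 2)) := by
    rw [Real.rpow_neg hnpos.le]
    field_simp
  rw [hgoal]
  exact hfin

end FreeCLT
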